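/- Let K = (S, Act, →, AP, 𝓛) be a Kripke transition system (doubly labelled transition system), σ a path in K, and φ a UCTL* formula. Then the mapping ks₂ preserves truth: K,σ ⊨ φ if and only if ks₂(K), ks₂(σ) ⊨ ks₂(φ). -/

import Mathlib

/-!
Statement 4: the mapping `ks₂` from UCTL* (over Kripke transition systems) to CTL*
(over Kripke structures) preserves truth:
`K,σ ⊨ φ` iff `ks₂(K), ks₂(σ) ⊨ ks₂(φ)`.
-/

namespace Stmt4

/-- A path in a Kripke transition system with transition relation `Tr ⊆ S × Act × S`. -/
structure LPath {S Act : Type} (Tr : S → Act → S → Prop) where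
  states : ℕ → S
  acts : ℕ → Act
  valid : ∀ n, Tr (states n) (acts n) (states (n + 1))

/-- The suffix of a path, starting at position `k`. -/
def LPath.suffix {S Act : Type} {Tr : S → Act → S → Prop} (σ : LPath Tr) (k : ℕ) :
    LPath Tr where
  states n := σ.states (n + k)
  acts n := σ.acts (n + k)
  valid n := by
    have h := σ.valid (n + k)
    rwa [show n + k + 1 = n + 1 + k by omega] at h

/-- A path in a Kripke structure with transition relation `R ⊆ S × S`. -/
structure KPath {S : Type} (R : S → S → Prop) where
  states : ℕ → S
  valid : ∀ n, R (states n) (states (n + 1))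

/-- The suffix of a path in a Kripke structure, starting at position `k`. -/
def KPath.suffix {S : Type} {R : S → S → Prop} (σ : KPath R) (k : ℕ) : KPath R where
  states n := σ.states (n + k)
  valid n := by
    have h := σ.valid (n + k)
    rwa [show n + k + 1 = n + 1 + k by omega] at h

mutual
/-- UCTL* state formulas over actions `Act` and atomic propositions `AP`:
`φ ::= true | p | ¬φ | φ∧φ' | ∃π`. -/
inductive USF (Act AP : Type) : Type
  | tt : USF Act AP
  | atom : AP → USF Act AP
  | neg : USF Act AP → USF Act AP
  | and : USF Act AP → USF Act AP → USF Act AP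
  | ex : UPF Act AP → USF Act AP

/-- UCTL* path formulas over actions `Act` and atomic propositions `AP`:
`π ::= φ | ¬π | π∧π' | Xπ | X_a π | π U π'`. -/
inductive UPF (Act AP : Type) : Type
  | state : USF Act AP → UPF Act AP
  | neg : UPF Act AP → UPF Act AP
  | and : UPF Act AP → UPF Act AP → UPF Act AP
  | next : UPF Act AP → UPF Act AP
  | anext : Act → UPF Act AP → UPF Act AP
  | unt : UPF Act AP → UPF Act AP → UPF Act AP
end

mutual
/-- Satisfaction of UCTL* state formulas at a state of a KTS. -/
def usatS {S Act AP : Type} (Tr : S → Act → S → Prop) (Lab : S → Set AP) :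
    USF Act AP → S → Prop
  | .tt, _ => True
  | .atom p, s => p ∈ Lab s
  | .neg φ, s => ¬ usatS Tr Lab φ s
  | .and φ ψ, s => usatS Tr Lab φ s ∧ usatS Tr Lab ψ s
  | .ex π, s => ∃ σ : LPath Tr, σ.states 0 = s ∧ usatP Tr Lab π σ

/-- Satisfaction of UCTL* path formulas on a path of a KTS. -/
def usatP {S Act AP : Type} (Tr : S → Act → S → Prop) (Lab : S → Set AP) :
    UPF Act AP → LPath Tr → Prop
  | .state φ, σ => usatS Tr Lab φ (σ.states 0)
  | .neg π, σ => ¬ usatP Tr Lab π σ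
  | .and π π', σ => usatP Tr Lab π σ ∧ usatP Tr Lab π' σ
  | .next π, σ => usatP Tr Lab π (σ.suffix 1)
  | .anext a π, σ => σ.acts 0 = a ∧ usatP Tr Lab π (σ.suffix 1)
  | .unt π π', σ => ∃ j, usatP Tr Lab π' (σ.suffix j) ∧ ∀ i < j, usatP Tr Lab π (σ.suffix i)
end

mutual
/-- CTL* state formulas over atomic propositions `AP`. -/
inductive CSF (AP : Type) : Type
  | tt : CSF AP
  | atom : AP → CSF AP
  | neg : CSF AP → CSF AP
  | and : CSF AP → CSF AP → CSF AP
  | ex : CPF AP → CSF AP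

/-- CTL* path formulas over atomic propositions `AP`. -/
inductive CPF (AP : Type) : Type
  | state : CSF AP → CPF AP
  | neg : CPF AP → CPF AP
  | and : CPF AP → CPF AP → CPF AP
  | next : CPF AP → CPF AP
  | unt : CPF AP → CPF AP → CPF AP
end

mutual
/-- Satisfaction of CTL* state formulas at a state of a Kripke structure. -/
def csatS {S AP : Type} (R : S → S → Prop) (Lab : S → Set AP) : CSF AP → S → Prop
  | .tt, _ => True
  | .atom p, s => p ∈ Lab s
  | .neg φ, s => ¬ csatS R Lab φ s
  | .and φ ψ, s => csatS R Lab φ s ∧ csatS R Lab ψ s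
  | .ex π, s => ∃ σ : KPath R, σ.states 0 = s ∧ csatP R Lab π σ

/-- Satisfaction of CTL* path formulas on a path of a Kripke structure. -/
def csatP {S AP : Type} (R : S → S → Prop) (Lab : S → Set AP) : CPF AP → KPath R → Prop
  | .state φ, σ => csatS R Lab φ (σ.states 0)
  | .neg π, σ => ¬ csatP R Lab π σ
  | .and π π', σ => csatP R Lab π σ ∧ csatP R Lab π' σ
  | .next π, σ => csatP R Lab π (σ.suffix 1)
  | .unt π π', σ => ∃ j, csatP R Lab π' (σ.suffix j) ∧ ∀ i < j, csatP R Lab π (σ.suffix i)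
end

section ks2Construction

variable {S Act AP : Type} (Tr : S → Act → S → Prop) (Lab : S → Set AP)

/-- States of the Kripke structure `ks₂(K)`: the states of `K` together with one fresh
state for each transition of `K`. -/
abbrev KState := S ⊕ {t : S × Act × S // Tr t.1 t.2.1 t.2.2}

/-- The atomic propositions of `ks₂(K)` are `AP ∪ Act ∪ {F}`, with `F` fresh. -/
abbrev AP2 (Act AP : Type) : Type := AP ⊕ Act ⊕ Unit

/-- The fresh atomic proposition `F`. -/
def Fprop (Act AP : Type) : AP2 Act AP := Sum.inr (Sum.inr ())

/-- Transitions of `ks₂(K)`: for every transition `(s₀, α, s₁)` of `K`, the new state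
`(s₀, α, s₁)` sits between `s₀` and `s₁`. -/
def KTrans : KState Tr → KState Tr → Prop
  | .inl s, .inr t => t.1.1 = s
  | .inr t, .inl s => t.1.2.2 = s
  | _, _ => False

/-- Labelling of `ks₂(K)`: an original state `s` is labelled `{F} ∪ 𝓛(s)`, the state
corresponding to a transition `(s₀, α, s₁)` is labelled `{α}`. -/
def KLab : KState Tr → Set (AP2 Act AP)
  | .inl s => insert (Fprop Act AP) (Sum.inl '' Lab s)
  | .inr t => {Sum.inr (Sum.inl t.1.2.1)}

/-- The path `ks₂(σ)` in `ks₂(K)` induced by a path `σ` in `K`: between consecutive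
states of `σ` the corresponding transition-state is inserted. -/
def ks2Path (σ : LPath Tr) : KPath (KTrans Tr) where
  states n :=
    if n % 2 = 0 then Sum.inl (σ.states (n / 2))
    else Sum.inr ⟨(σ.states (n / 2), σ.acts (n / 2), σ.states (n / 2 + 1)), σ.valid (n / 2)⟩
  valid n := by
    rcases Nat.even_or_odd n with ⟨k, hk⟩ | ⟨k, hk⟩
    · have h1 : n % 2 = 0 := by omega
      have h2 : ¬ (n + 1) % 2 = 0 := by omega
      have h3 : (n + 1) / 2 = n / 2 := by omega
      simp only [h1, h2, if_true, if_false, h3, KTrans]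
    · have h1 : ¬ n % 2 = 0 := by omega
      have h2 : (n + 1) % 2 = 0 := by omega
      have h3 : (n + 1) / 2 = n / 2 + 1 := by omega
      simp only [h1, h2, if_true, if_false, h3, KTrans]

end ks2Construction

/-- The atomic proposition `F`, as a CTL* path formula. -/
def Fpf (Act AP : Type) : CPF (AP2 Act AP) := .state (.atom (Fprop Act AP))

mutual
/-- The translation `ks₂` from UCTL* state formulas to CTL* state formulas. -/
def ks2S {Act AP : Type} : USF Act AP → CSF (AP2 Act AP)
  | .tt => .tt
  | .atom p => .atom (Sum.inl p)
  | .neg φ => .neg (ks2S φ)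
  | .and φ ψ => .and (ks2S φ) (ks2S ψ)
  | .ex π => .ex (ks2P π)

/-- The translation `ks₂` from UCTL* path formulas to CTL* path formulas.
(Implication `F ⇒ ψ` is expressed as `¬(F ∧ ¬ψ)`.) -/
def ks2P {Act AP : Type} : UPF Act AP → CPF (AP2 Act AP)
  | .state φ => .state (ks2S φ)
  | .neg π => .neg (ks2P π)
  | .and π π' => .and (ks2P π) (ks2P π')
  | .next π => .next (.next (ks2P π))
  | .anext a π =>
      .and (.next (.state (.atom (Sum.inr (Sum.inl a))))) (.next (.next (ks2P π)))
  | .unt π π' =>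
      .unt (.neg (.and (Fpf Act AP) (.neg (ks2P π)))) (.and (Fpf Act AP) (ks2P π'))
end

section Aux

variable {S Act AP : Type} {Tr : S → Act → S → Prop} {Lab : S → Set AP}

lemma KPath.ext' {S : Type} {R : S → S → Prop} {τ τ' : KPath R}
    (h : τ.states = τ'.states) : τ = τ' := by
  cases τ; cases τ'; simp_all

lemma ks2Path_states_even (σ : LPath Tr) (k : ℕ) :
    (ks2Path Tr σ).states (2 * k) = Sum.inl (σ.states k) := by
  simp only [ks2Path]
  have h1 : 2 * k % 2 = 0 := by omega
  have h2 : 2 * k / 2 = k := by omega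
  simp [h1, h2]

lemma ks2Path_states_odd (σ : LPath Tr) (k : ℕ) :
    (ks2Path Tr σ).states (2 * k + 1) =
      Sum.inr ⟨(σ.states k, σ.acts k, σ.states (k + 1)), σ.valid k⟩ := by
  simp only [ks2Path]
  have h1 : ¬ (2 * k + 1) % 2 = 0 := by omega
  have h2 : (2 * k + 1) / 2 = k := by omega
  simp [h1, h2]

lemma ks2Path_suffix (σ : LPath Tr) (k : ℕ) :
    (ks2Path Tr σ).suffix (2 * k) = ks2Path Tr (σ.suffix k) := by
  apply KPath.ext'
  funext n
  simp only [KPath.suffix, ks2Path, LPath.suffix]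
  have hm : (n + 2 * k) % 2 = n % 2 := by omega
  by_cases h : n % 2 = 0
  · have hd : (n + 2 * k) / 2 = n / 2 + k := by omega
    simp [hm, h, hd]
  · have hd : (n + 2 * k) / 2 = n / 2 + k := by omega
    have hd2 : (n + 2 * k) / 2 + 1 = n / 2 + 1 + k := by omega
    simp only [hm, h, if_false]
    apply congrArg
    apply Subtype.ext
    simp only
    rw [hd, show n / 2 + k + 1 = n / 2 + 1 + k by omega]

lemma Fprop_mem_inl (s : S) : Fprop Act AP ∈ KLab Tr Lab (Sum.inl s) := by
  simp [KLab]

lemma Fprop_not_mem_inr (t : {t : S × Act × S // Tr t.1 t.2.1 t.2.2}) :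
    Fprop Act AP ∉ KLab Tr Lab (Sum.inr t) := by
  simp [KLab, Fprop]

/-- Every path in `ks₂(K)` starting at an original state is of the form `ks₂(σ)`. -/
lemma lift_path (τ : KPath (KTrans Tr)) (s0 : S) (h0 : τ.states 0 = Sum.inl s0) :
    ∃ σ : LPath Tr, ks2Path Tr σ = τ := by
  -- even positions are original states
  have hpar : ∀ k, ∃ s, τ.states (2 * k) = Sum.inl s := by
    intro k
    induction k with
    | zero => exact ⟨s0, h0⟩
    | succ k ih =>
      obtain ⟨s, hs⟩ := ih
      have v1 := τ.valid (2 * k)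
      rw [hs] at v1
      cases ht : τ.states (2 * k + 1) with
      | inl s' => rw [ht] at v1; simp [KTrans] at v1
      | inr t =>
        rw [ht] at v1
        have v2 := τ.valid (2 * k + 1)
        rw [ht] at v2
        cases hu : τ.states (2 * k + 2) with
        | inl s'' =>
          exact ⟨s'', rfl⟩
        | inr t' => rw [hu] at v2; simp [KTrans] at v2
  set f : ℕ → S := fun k => (hpar k).choose with hf_def
  have hf : ∀ k, τ.states (2 * k) = Sum.inl (f k) := fun k => (hpar k).choose_spec
  have hodd : ∀ k, ∃ t : {t : S × Act × S // Tr t.1 t.2.1 t.2.2},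
      τ.states (2 * k + 1) = Sum.inr t ∧ t.1.1 = f k ∧ t.1.2.2 = f (k + 1) := by
    intro k
    have v1 := τ.valid (2 * k)
    rw [hf k] at v1
    cases ht : τ.states (2 * k + 1) with
    | inl s' => rw [ht] at v1; simp [KTrans] at v1
    | inr t =>
      rw [ht] at v1
      have v2 := τ.valid (2 * k + 1)
      rw [ht, show 2 * k + 1 + 1 = 2 * (k + 1) by omega, hf (k + 1)] at v2
      exact ⟨t, rfl, by simpa [KTrans] using v1, by simpa [KTrans] using v2⟩
  set g : ℕ → {t : S × Act × S // Tr t.1 t.2.1 t.2.2} := fun k => (hodd k).choose with hg_def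
  have hg : ∀ k, τ.states (2 * k + 1) = Sum.inr (g k) ∧ (g k).1.1 = f k ∧
      (g k).1.2.2 = f (k + 1) := fun k => (hodd k).choose_spec
  refine ⟨⟨f, fun k => (g k).1.2.1, ?_⟩, ?_⟩
  · intro k
    have := (g k).2
    rw [(hg k).2.1, (hg k).2.2] at this
    exact this
  · apply KPath.ext'
    funext n
    rcases Nat.even_or_odd n with ⟨k, hk⟩ | ⟨k, hk⟩
    · rw [show n = 2 * k by omega]
      rw [ks2Path_states_even, hf k]
    · rw [show n = 2 * k + 1 by omega]
      rw [ks2Path_states_odd, (hg k).1]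
      congr 1
      apply Subtype.ext
      simp only
      refine Prod.ext ?_ (Prod.ext rfl ?_)
      · exact (hg k).2.1.symm
      · exact (hg k).2.2.symm

mutual

lemma ks2_state (Tr : S → Act → S → Prop) (Lab : S → Set AP)
    (φ : USF Act AP) (s : S) :
    usatS Tr Lab φ s ↔ csatS (KTrans Tr) (KLab Tr Lab) (ks2S φ) (Sum.inl s) := by
  cases φ with
  | tt => simp [usatS, ks2S, csatS]
  | atom p => simp [usatS, ks2S, csatS, KLab, Fprop]
  | neg φ =>
    simp only [usatS, ks2S, csatS]
    rw [ks2_state Tr Lab φ s]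
  | and φ ψ =>
    simp only [usatS, ks2S, csatS]
    rw [ks2_state Tr Lab φ s, ks2_state Tr Lab ψ s]
  | ex π =>
    simp only [usatS, ks2S, csatS]
    constructor
    · rintro ⟨σ, hσ0, hσ⟩
      refine ⟨ks2Path Tr σ, ?_, ?_⟩
      · have := ks2Path_states_even σ 0
        simpa [hσ0] using this
      · exact (ks2_path Tr Lab π σ).1 hσ
    · rintro ⟨τ, hτ0, hτ⟩
      obtain ⟨σ, rfl⟩ := lift_path τ s hτ0
      have h0 : σ.states 0 = s := by
        have := ks2Path_states_even σ 0
        simp only [Nat.mul_zero] at this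
        rw [this] at hτ0
        exact Sum.inl.inj hτ0
      exact ⟨σ, h0, (ks2_path Tr Lab π σ).2 hτ⟩

lemma ks2_path (Tr : S → Act → S → Prop) (Lab : S → Set AP)
    (π : UPF Act AP) (σ : LPath Tr) :
    usatP Tr Lab π σ ↔ csatP (KTrans Tr) (KLab Tr Lab) (ks2P π) (ks2Path Tr σ) := by
  cases π with
  | state φ =>
    simp only [usatP, ks2P, csatP]
    have h0 : (ks2Path Tr σ).states 0 = Sum.inl (σ.states 0) := by
      have := ks2Path_states_even σ 0
      simpa using this
    rw [h0]
    exact ks2_state Tr Lab φ (σ.states 0)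
  | neg π =>
    simp only [usatP, ks2P, csatP]
    rw [ks2_path Tr Lab π σ]
  | and π π' =>
    simp only [usatP, ks2P, csatP]
    rw [ks2_path Tr Lab π σ, ks2_path Tr Lab π' σ]
  | next π =>
    simp only [usatP, ks2P, csatP]
    have hs : ((ks2Path Tr σ).suffix 1).suffix 1 = ks2Path Tr (σ.suffix 1) := by
      rw [← ks2Path_suffix σ 1]
      apply KPath.ext'
      funext n
      simp [KPath.suffix]
    rw [hs]
    exact ks2_path Tr Lab π (σ.suffix 1)
  | anext a π =>
    simp only [usatP, ks2P, csatP, csatS]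
    have h1 : ((ks2Path Tr σ).suffix 1).states 0 =
        Sum.inr ⟨(σ.states 0, σ.acts 0, σ.states 1), σ.valid 0⟩ := by
      have := ks2Path_states_odd σ 0
      simpa [KPath.suffix] using this
    have hs : ((ks2Path Tr σ).suffix 1).suffix 1 = ks2Path Tr (σ.suffix 1) := by
      rw [← ks2Path_suffix σ 1]
      apply KPath.ext'
      funext n
      simp [KPath.suffix]
    rw [h1, hs]
    have hmem : (Sum.inr (Sum.inl a) : AP2 Act AP) ∈
        KLab Tr Lab (Sum.inr ⟨(σ.states 0, σ.acts 0, σ.states 1), σ.valid 0⟩) ↔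
        σ.acts 0 = a := by
      simp [KLab, eq_comm]
    rw [hmem]
    rw [ks2_path Tr Lab π (σ.suffix 1)]
  | unt π π' =>
    simp only [usatP, ks2P, csatP, Fpf, csatS]
    constructor
    · rintro ⟨j, hj, hlt⟩
      refine ⟨2 * j, ?_, ?_⟩
      · have h0 : ((ks2Path Tr σ).suffix (2 * j)).states 0 =
            Sum.inl ((σ.suffix j).states 0) := by
          rw [ks2Path_suffix]
          have := ks2Path_states_even (σ.suffix j) 0
          simpa using this
        rw [h0, ks2Path_suffix]
        exact ⟨Fprop_mem_inl _, (ks2_path Tr Lab π' (σ.suffix j)).1 hj⟩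
      · intro i hi
        rcases Nat.even_or_odd i with ⟨k, hk⟩ | ⟨k, hk⟩
        · rw [show i = 2 * k by omega, ks2Path_suffix]
          have h0 : (ks2Path Tr (σ.suffix k)).states 0 =
              Sum.inl ((σ.suffix k).states 0) := by
            have := ks2Path_states_even (σ.suffix k) 0
            simpa using this
          rw [h0]
          rintro ⟨-, hneg⟩
          exact hneg ((ks2_path Tr Lab π (σ.suffix k)).1 (hlt k (by omega)))
        · have h0 : ((ks2Path Tr σ).suffix i).states 0 =
              Sum.inr ⟨(σ.states k, σ.acts k, σ.states (k + 1)), σ.valid k⟩ := by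
            have := ks2Path_states_odd σ k
            rw [show i = 2 * k + 1 by omega]
            simpa [KPath.suffix] using this
          rw [h0]
          rintro ⟨hF, -⟩
          exact Fprop_not_mem_inr _ hF
    · rintro ⟨j, ⟨hF, hj⟩, hlt⟩
      -- j must be even
      rcases Nat.even_or_odd j with ⟨k, hk⟩ | ⟨k, hk⟩
      · rw [show j = 2 * k by omega, ks2Path_suffix] at hj
        refine ⟨k, (ks2_path Tr Lab π' (σ.suffix k)).2 hj, ?_⟩
        intro i hi
        have h := hlt (2 * i) (by omega)
        rw [ks2Path_suffix] at h
        have h0 : (ks2Path Tr (σ.suffix i)).states 0 =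
            Sum.inl ((σ.suffix i).states 0) := by
          have := ks2Path_states_even (σ.suffix i) 0
          simpa using this
        rw [h0] at h
        have hnn : ¬¬ csatP (KTrans Tr) (KLab Tr Lab) (ks2P π) (ks2Path Tr (σ.suffix i)) := by
          intro hn
          exact h ⟨Fprop_mem_inl _, hn⟩
        exact (ks2_path Tr Lab π (σ.suffix i)).2 (not_not.mp hnn)
      · exfalso
        have h0 : ((ks2Path Tr σ).suffix j).states 0 =
            Sum.inr ⟨(σ.states k, σ.acts k, σ.states (k + 1)), σ.valid k⟩ := by
          have := ks2Path_states_odd σ k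
          rw [show j = 2 * k + 1 by omega]
          simpa [KPath.suffix] using this
        rw [h0] at hF
        exact Fprop_not_mem_inr _ hF

end

end Aux

/-- Let `K` be a Kripke transition system, `σ` a path in `K`, and `φ` a
UCTL* formula. Then the mapping `ks₂` preserves truth: `K,σ ⊨ φ` iff
`ks₂(K), ks₂(σ) ⊨ ks₂(φ)`. -/
theorem ks2_preserves_truth {S Act AP : Type} (Tr : S → Act → S → Prop)
    (Lab : S → Set AP) (σ : LPath Tr) (φ : UPF Act AP) :
    usatP Tr Lab φ σ ↔ csatP (KTrans Tr) (KLab Tr Lab) (ks2P φ) (ks2Path Tr σ) :=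
  ks2_path Tr Lab φ σ

end Stmt4
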